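/- arXiv:1004.4076 — 3 statements merged into one kernel-verified Lean document; each statement's English description precedes it below -/
import Mathlib

section
/- Let z ≠ 0 and ε > 0, and let κ_ε^z be the kernel κ_ε^z(s) = ε^{-1}κ^z(s/ε) with κ^z(σ) = (2/z²)(z+σ) on [-z,0] (for z > 0) and the mirrored definition for z < 0, zero elsewhere. Then the k-th Fourier coefficient of κ_ε^z viewed as a function on [0,1] equals -(2/(ω²z²))(e^{iωz} - 1 - iωz), where ω = 2πkε, and consequently 1 - κ̂_ε^z(k) = (2/(ω²z²))(e^{iωz} - 1 - iωz + ω²z²/2). -/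
open Real Complex MeasureTheory

/-- The triangular kernel `κ^z`. -/
noncomputable def kappa (z σ : ℝ) : ℝ :=
  if -z ≤ σ ∧ σ ≤ 0 then 2 / z ^ 2 * (z + σ)
  else if 0 ≤ σ ∧ σ ≤ -z then -(2 / z ^ 2 * (z + σ))
  else 0

/-- The rescaled kernel `κ_ε^z(s) = ε⁻¹ κ^z(s/ε)`. -/
noncomputable def kappaE (ε z s : ℝ) : ℝ := ε⁻¹ * kappa z (s / ε)

set_option maxHeartbeats 1600000 in
theorem fourierCoeff_kappa (z ε : ℝ) (hz : z ≠ 0) (hε : 0 < ε) (k : ℤ) (hk : k ≠ 0)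
    (ω : ℝ) (hω : ω = 2 * π * k * ε) :
    (∫ x : ℝ, (kappaE ε z x : ℂ) * Complex.exp (-(2 * π * Complex.I * k * x)))
        = -(2 / ((ω : ℂ) ^ 2 * (z : ℂ) ^ 2)) *
            (Complex.exp (Complex.I * ω * z) - 1 - Complex.I * ω * z) ∧
    1 - (∫ x : ℝ, (kappaE ε z x : ℂ) * Complex.exp (-(2 * π * Complex.I * k * x)))
        = 2 / ((ω : ℂ) ^ 2 * (z : ℂ) ^ 2) *
            (Complex.exp (Complex.I * ω * z) - 1 - Complex.I * ω * z
              + (ω : ℂ) ^ 2 * (z : ℂ) ^ 2 / 2) := by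
  have hπ : (π:ℝ) ≠ 0 := Real.pi_ne_zero
  have hkc : (k:ℂ) ≠ 0 := Int.cast_ne_zero.mpr hk
  have hεne : ε ≠ 0 := ne_of_gt hε
  have hεc : (ε:ℂ) ≠ 0 := by exact_mod_cast hεne
  have hzc : (z:ℂ) ≠ 0 := by exact_mod_cast hz
  have hπc : (π:ℂ) ≠ 0 := by exact_mod_cast hπ
  have hωne : ω ≠ 0 := by
    rw [hω]; exact mul_ne_zero (mul_ne_zero (mul_ne_zero two_ne_zero hπ)
      (Int.cast_ne_zero.mpr hk)) hεne
  have hωc : (ω:ℂ) ≠ 0 := by exact_mod_cast hωne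
  set c : ℂ := -(2 * π * Complex.I * k) with hc
  have hωz : (ω:ℂ) = 2 * π * k * ε := by rw [hω]; push_cast; ring
  have hcω : c = -(Complex.I * ω / ε) := by rw [hc, hωz]; field_simp
  have hcne : c ≠ 0 := by
    simp only [hc, neg_ne_zero]
    exact mul_ne_zero (mul_ne_zero (mul_ne_zero two_ne_zero hπc) Complex.I_ne_zero) hkc
  set A : ℂ := 2 / (z * ε) with hA
  set B : ℂ := 2 / (z^2 * ε^2) with hB
  set g : ℝ → ℂ := fun x => (A + B * x) * Complex.exp (c * x) with hg
  have hmain : (∫ x : ℝ, (kappaE ε z x : ℂ) * Complex.exp (-(2 * π * Complex.I * k * x)))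
      = ∫ x in (-(ε*z))..0, g x := by
    rcases lt_or_gt_of_ne hz with hzneg | hzpos
    · -- z < 0, support in Icc 0 (-(ε*z))
      have h1 : (∫ x : ℝ, (kappaE ε z x : ℂ) * Complex.exp (-(2 * π * Complex.I * k * x)))
          = ∫ x in Set.Icc 0 (-(ε*z)),
              (kappaE ε z x : ℂ) * Complex.exp (-(2 * π * Complex.I * k * x)) := by
        refine (setIntegral_eq_integral_of_forall_compl_eq_zero fun x hx => ?_).symm
        simp only [Set.mem_Icc, not_and_or, not_le] at hx
        have hx0 : kappa z (x / ε) = 0 := by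
          unfold kappa
          rcases hx with hx | hx
          · have hσ : x / ε < 0 := div_neg_of_neg_of_pos hx hε
            rw [if_neg, if_neg]
            · rintro ⟨h1, h2⟩; linarith
            · rintro ⟨h1, h2⟩; nlinarith
          · have hσ : -z < x / ε := by rw [lt_div_iff₀ hε]; nlinarith
            rw [if_neg, if_neg]
            · rintro ⟨h1, h2⟩; linarith
            · rintro ⟨h1, h2⟩; linarith
        simp [kappaE, hx0]
      rw [h1]
      have h2 : ∀ x ∈ Set.Icc (0:ℝ) (-(ε*z)),
          (kappaE ε z x : ℂ) * Complex.exp (-(2 * π * Complex.I * k * x)) = -(g x) := by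
        intro x hx
        obtain ⟨hx1, hx2⟩ := hx
        have hσ1 : 0 ≤ x / ε := div_nonneg hx1 hε.le
        have hσ2 : x / ε ≤ -z := by rw [div_le_iff₀ hε]; nlinarith
        have hκ : kappa z (x / ε) = -(2 / z ^ 2 * (z + x / ε)) := by
          unfold kappa
          rw [if_neg, if_pos ⟨hσ1, hσ2⟩]
          rintro ⟨h1, h2⟩; linarith
        simp only [kappaE, hκ, hg]
        have harg : -(2 * ↑π * Complex.I * ↑k * ↑x) = c * ↑x := by rw [hc]; ring
        rw [harg]
        push_cast
        rw [hA, hB]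
        field_simp
      rw [setIntegral_congr_fun measurableSet_Icc h2]
      rw [MeasureTheory.integral_Icc_eq_integral_Ioc, MeasureTheory.integral_neg]
      rw [← intervalIntegral.integral_of_le (by nlinarith : (0:ℝ) ≤ -(ε*z))]
      rw [← intervalIntegral.integral_symm]
    · -- z > 0, support in Icc (-(ε*z)) 0
      have h1 : (∫ x : ℝ, (kappaE ε z x : ℂ) * Complex.exp (-(2 * π * Complex.I * k * x)))
          = ∫ x in Set.Icc (-(ε*z)) 0,
              (kappaE ε z x : ℂ) * Complex.exp (-(2 * π * Complex.I * k * x)) := by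
        refine (setIntegral_eq_integral_of_forall_compl_eq_zero fun x hx => ?_).symm
        simp only [Set.mem_Icc, not_and_or, not_le] at hx
        have hx0 : kappa z (x / ε) = 0 := by
          unfold kappa
          rcases hx with hx | hx
          · have hσ : x / ε < -z := by rw [div_lt_iff₀ hε]; nlinarith
            rw [if_neg, if_neg]
            · rintro ⟨h1, h2⟩; linarith
            · rintro ⟨h1, h2⟩; linarith
          · have hσ : 0 < x / ε := div_pos hx hε
            rw [if_neg, if_neg]
            · rintro ⟨h1, h2⟩; linarith
            · rintro ⟨h1, h2⟩; nlinarith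
        simp [kappaE, hx0]
      rw [h1]
      have h2 : ∀ x ∈ Set.Icc (-(ε*z)) (0:ℝ),
          (kappaE ε z x : ℂ) * Complex.exp (-(2 * π * Complex.I * k * x)) = g x := by
        intro x hx
        obtain ⟨hx1, hx2⟩ := hx
        have hσ1 : -z ≤ x / ε := by rw [le_div_iff₀ hε]; nlinarith
        have hσ2 : x / ε ≤ 0 := div_nonpos_of_nonpos_of_nonneg hx2 hε.le
        have hκ : kappa z (x / ε) = 2 / z ^ 2 * (z + x / ε) := by
          unfold kappa; rw [if_pos ⟨hσ1, hσ2⟩]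
        simp only [kappaE, hκ, hg]
        have harg : -(2 * ↑π * Complex.I * ↑k * ↑x) = c * ↑x := by rw [hc]; ring
        rw [harg]
        push_cast
        rw [hA, hB]
        field_simp
      rw [setIntegral_congr_fun measurableSet_Icc h2]
      rw [MeasureTheory.integral_Icc_eq_integral_Ioc]
      rw [← intervalIntegral.integral_of_le (by nlinarith : -(ε*z) ≤ (0:ℝ))]
  have key : (∫ x : ℝ, (kappaE ε z x : ℂ) * Complex.exp (-(2 * π * Complex.I * k * x)))
      = -(2 / ((ω : ℂ) ^ 2 * (z : ℂ) ^ 2)) *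
          (Complex.exp (Complex.I * ω * z) - 1 - Complex.I * ω * z) := by
    rw [hmain]
    set F : ℝ → ℂ := fun x => ((A + B * x) / c - B / c ^ 2) * Complex.exp (c * x) with hF
    have hderiv : ∀ x ∈ Set.uIcc (-(ε*z)) (0:ℝ), HasDerivAt F (g x) x := by
      intro x _
      have hG : HasDerivAt (fun w : ℂ => ((A + B * w) / c - B / c ^ 2) * Complex.exp (c * w))
          ((A + B * (x:ℂ)) * Complex.exp (c * x)) (x:ℂ) := by
        have h1 : HasDerivAt (fun w : ℂ => (A + B * w) / c - B / c ^ 2) (B / c) (x:ℂ) := by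
          have := (((hasDerivAt_id (x:ℂ)).const_mul B).const_add A).div_const c
          simpa using this.sub_const (B / c ^ 2)
        have h2 : HasDerivAt (fun w : ℂ => Complex.exp (c * w))
            (Complex.exp (c * x) * c) (x:ℂ) := by
          have := ((hasDerivAt_id (x:ℂ)).const_mul c).cexp
          simpa using this
        have := h1.mul h2
        refine this.congr_deriv ?_
        field_simp
        ring
      exact hG.comp_ofReal
    have hcont : Continuous g := by
      apply Continuous.mul
      · exact continuous_const.add (continuous_const.mul Complex.continuous_ofReal)
      · exact Complex.continuous_exp.comp (continuous_const.mul Complex.continuous_ofReal)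
    rw [intervalIntegral.integral_eq_sub_of_hasDerivAt hderiv (hcont.intervalIntegrable _ _)]
    rw [hF]
    simp only [Complex.ofReal_neg, Complex.ofReal_mul, Complex.ofReal_zero]
    have hexp0 : Complex.exp (c * 0) = 1 := by simp
    have hexpz : Complex.exp (c * -((ε:ℂ) * z)) = Complex.exp (Complex.I * ω * z) := by
      congr 1; rw [hcω]; field_simp
    rw [hexp0, hexpz, hA, hB, hcω]
    set E := Complex.exp (Complex.I * (ω:ℂ) * z) with hE
    have hI := Complex.I_ne_zero
    have h2 : Complex.I ^ 2 = -1 := Complex.I_sq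
    have h3 : Complex.I ^ 3 = -Complex.I := by rw [pow_succ, h2]; ring
    have h4 : Complex.I ^ 4 = 1 := by rw [show (4:ℕ) = 2*2 by rfl, pow_mul, h2]; ring
    have h6 : Complex.I ^ 6 = -1 := by rw [show (6:ℕ) = 2*3 by rfl, pow_mul, h2]; ring
    have h7 : Complex.I ^ 7 = -Complex.I := by rw [pow_succ, h6]; ring
    field_simp
    ring_nf
    simp only [h2, h3, h4, h6, h7]
    field_simp
    ring_nf
  refine ⟨key, ?_⟩
  rw [key]
  have hW : ((ω:ℂ)^2 * (z:ℂ)^2) ≠ 0 := mul_ne_zero (pow_ne_zero _ hωc) (pow_ne_zero _ hzc)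
  field_simp
  ring
end

section
/- For every real ω ≠ 0, (4/ω⁴)·[2 - 2e^{-ω²/4} + (3/16)ω⁴ - (1/2)ω²e^{-ω²/4} - (1/4)ω⁴e^{-ω²/4}] ≤ (5/6)·(1 - e^{-ω²/4}). -/
lemma exp_poly_aux : ∀ s : ℝ, 0 ≤ s →
    0 ≤ Real.exp (-s) * (2 + 2*s + 2/3*s^2) + s^2/3 - 2 := by
  have hderiv : ∀ x : ℝ, HasDerivAt
      (fun x : ℝ => Real.exp (-x) * (2 + 2*x + 2/3*x^2) + x^2/3 - 2)
      (2/3*x*(1 - Real.exp (-x)*(1+x))) x := by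
    intro x
    have h1 : HasDerivAt (fun x : ℝ => Real.exp (-x)) (-Real.exp (-x)) x := by
      simpa using (hasDerivAt_neg x).exp
    have h2 : HasDerivAt (fun x : ℝ => 2 + 2*x + 2/3*x^2) (2 + 4/3*x) x := by
      have ha : HasDerivAt (fun x : ℝ => x^2) (2*x) x := by
        simpa using hasDerivAt_pow 2 x
      have := (((hasDerivAt_id x).const_mul (2:ℝ)).const_add 2).add (ha.const_mul (2/3:ℝ))
      refine this.congr_deriv ?_
      ring
    have h3 : HasDerivAt (fun x : ℝ => x^2/3) (2*x/3) x := by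
      have ha : HasDerivAt (fun x : ℝ => x^2) (2*x) x := by
        simpa using hasDerivAt_pow 2 x
      simpa using ha.div_const 3
    have := ((h1.mul h2).add h3).sub_const 2
    refine this.congr_deriv ?_
    ring
  intro s hs
  have mono : MonotoneOn (fun x : ℝ => Real.exp (-x) * (2 + 2*x + 2/3*x^2) + x^2/3 - 2)
      (Set.Ici 0) := by
    apply monotoneOn_of_deriv_nonneg (convex_Ici 0)
    · exact fun x _ => ((hderiv x).continuousAt).continuousWithinAt
    · exact fun x _ => ((hderiv x).differentiableAt).differentiableWithinAt
    · intro x hx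
      rw [interior_Ici] at hx
      rw [(hderiv x).deriv]
      have hx' : 0 < x := hx
      have hmul : Real.exp (-x) * Real.exp x = 1 := by
        rw [← Real.exp_add]; simp
      have hb : Real.exp (-x) * (1+x) ≤ 1 := by
        have h := mul_le_mul_of_nonneg_left (Real.add_one_le_exp x) (Real.exp_pos (-x)).le
        nlinarith [h, hmul]
      nlinarith [hb, hx'.le]
  have h0 := mono (Set.self_mem_Ici) (Set.mem_Ici.mpr hs) hs
  simp only [neg_zero, Real.exp_zero] at h0
  norm_num at h0
  linarith [h0]

theorem omega_ineq (ω : ℝ) (hω : ω ≠ 0) :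
    4 / ω ^ 4 * (2 - 2 * Real.exp (-ω ^ 2 / 4) + 3 / 16 * ω ^ 4
        - 1 / 2 * ω ^ 2 * Real.exp (-ω ^ 2 / 4) - 1 / 4 * ω ^ 4 * Real.exp (-ω ^ 2 / 4))
      ≤ 5 / 6 * (1 - Real.exp (-ω ^ 2 / 4)) := by
  have hs2 : (0:ℝ) ≤ ω^2/4 := by positivity
  have key := exp_poly_aux (ω^2/4) hs2
  rw [show -(ω^2/4) = -ω^2/4 by ring] at key
  have h4 : (0:ℝ) < ω^4 := by positivity
  rw [div_mul_eq_mul_div, div_le_iff₀ h4]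
  nlinarith [mul_nonneg key h4.le]
end

section
/- Let u ∈ L²(T) with Fourier coefficient u_k for a single mode u(x) = e^{2πikx}, let z ≠ 0, ε > 0, and κ_ε^z the triangular kernel as above with Fourier coefficient κ̂_ε^z(k) = -(2/(ω²z²))(e^{iωz} - 1 - iωz), ω = 2πkε. Then ∫_R e^{-z²} z⁴ |1 - κ̂_ε^z(k)|² dz = (4√π/ω⁴)[2 - 2e^{-ω²/4} + (3/16)ω⁴ - (1/2)ω² e^{-ω²/4} - (1/4)ω⁴ e^{-ω²/4}], and this is at most (5/6)√π (1 - e^{-ω²/4}). -/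
open Real MeasureTheory Filter Set

lemma int_pow (n : ℕ) : Integrable fun x : ℝ => x ^ n * Real.exp (-x ^ 2) := by
  have := integrable_rpow_mul_exp_neg_mul_sq (b := 1) one_pos (s := n)
    (neg_one_lt_zero.trans_le (Nat.cast_nonneg n))
  simpa [Real.rpow_natCast] using this

lemma abs_pow_le_aux (x : ℝ) (m : ℕ) : |x| ^ m ≤ 1 + x ^ (2 * m) := by
  have h2 : (0:ℝ) ≤ x ^ (2 * m) := by
    rw [pow_mul]; exact pow_nonneg (sq_nonneg x) m
  rcases le_total (|x|) 1 with h | h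
  · have := pow_le_one₀ (abs_nonneg x) h (n := m)
    linarith
  · have h1 : |x| ^ m ≤ |x| ^ (2 * m) := pow_le_pow_right₀ h (by omega)
    have h2' : |x| ^ (2 * m) = x ^ (2 * m) := by
      rw [pow_mul, pow_mul, sq_abs]
    linarith [h1.trans_eq h2']

lemma bound_integrable (n : ℕ) :
    Integrable fun x : ℝ => (1 + x ^ (2 * n)) * Real.exp (-x ^ 2) := by
  have h1 : Integrable fun x : ℝ => Real.exp (-x ^ 2) := by
    simpa [neg_mul] using integrable_exp_neg_mul_sq (b := 1) one_pos
  refine (h1.add (int_pow (2 * n))).congr (Filter.Eventually.of_forall fun x => ?_)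
  simp only [Pi.add_apply]; ring

lemma key_integrable {f : ℝ → ℝ} (hf : Continuous f) (n : ℕ)
    (h : ∀ x, |f x| ≤ (1 + x ^ (2 * n)) * Real.exp (-x ^ 2)) : Integrable f :=
  (bound_integrable n).mono' hf.aestronglyMeasurable (Filter.Eventually.of_forall h)

lemma bound_tendsto_top (n : ℕ) :
    Tendsto (fun x : ℝ => (1 + x ^ (2 * n)) * Real.exp (-x ^ 2)) atTop (nhds 0) := by
  have hsq : Tendsto (fun x : ℝ => x ^ 2) atTop atTop :=
    tendsto_pow_atTop (by norm_num)
  have h1 : Tendsto (fun x : ℝ => Real.exp (-x ^ 2)) atTop (nhds 0) :=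
    (Real.tendsto_exp_neg_atTop_nhds_zero).comp hsq
  have h2 : Tendsto (fun x : ℝ => (x ^ 2) ^ n * Real.exp (-x ^ 2)) atTop (nhds 0) :=
    (tendsto_pow_mul_exp_neg_atTop_nhds_zero n).comp hsq
  have h3 := h1.add h2
  simp only [add_zero] at h3
  refine h3.congr (fun x => ?_)
  rw [← pow_mul]; ring

lemma key_tendsto {f : ℝ → ℝ} (n : ℕ)
    (h : ∀ x, |f x| ≤ (1 + x ^ (2 * n)) * Real.exp (-x ^ 2)) :
    Tendsto f atTop (nhds 0) ∧ Tendsto f atBot (nhds 0) := by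
  refine ⟨squeeze_zero_norm h (bound_tendsto_top n), ?_⟩
  have hb : Tendsto (fun x : ℝ => (1 + x ^ (2 * n)) * Real.exp (-x ^ 2)) atBot (nhds 0) := by
    have h4 := (bound_tendsto_top n).comp tendsto_neg_atBot_atTop
    refine h4.congr (fun x => ?_)
    simp only [Function.comp]
    rw [neg_pow, neg_sq, pow_mul, neg_sq, ← pow_mul]
    ring_nf
  exact squeeze_zero_norm h hb

lemma integral_line_deriv_zero (F F' : ℝ → ℝ) (hF : ∀ x, HasDerivAt F (F' x) x)
    (hint : Integrable F') (htop : Tendsto F atTop (nhds 0))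
    (hbot : Tendsto F atBot (nhds 0)) : ∫ x, F' x = 0 := by
  have h1 := integral_Iic_of_hasDerivAt_of_tendsto' (a := 0) (fun x _ => hF x)
    hint.integrableOn hbot
  have h2 := integral_Ioi_of_hasDerivAt_of_tendsto' (a := 0) (fun x _ => hF x)
    hint.integrableOn htop
  rw [← intervalIntegral.integral_Iic_add_Ioi (b := (0:ℝ)) hint.integrableOn hint.integrableOn,
    h1, h2]
  ring

lemma ibp (g g' : ℝ → ℝ) (hg : ∀ x, HasDerivAt g (g' x) x)
    (h1 : Integrable fun x => x * Real.exp (-x ^ 2) * g x)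
    (h2 : Integrable fun x => Real.exp (-x ^ 2) * g' x)
    (htop : Tendsto (fun x => Real.exp (-x ^ 2) * g x) atTop (nhds 0))
    (hbot : Tendsto (fun x => Real.exp (-x ^ 2) * g x) atBot (nhds 0)) :
    ∫ x, x * Real.exp (-x ^ 2) * g x = (1 / 2) * ∫ x, Real.exp (-x ^ 2) * g' x := by
  have hFderiv : ∀ x, HasDerivAt (fun x => -(1 / 2) * (Real.exp (-x ^ 2) * g x))
      (x * Real.exp (-x ^ 2) * g x - (1 / 2) * (Real.exp (-x ^ 2) * g' x)) x := by
    intro x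
    have hp : HasDerivAt (fun x : ℝ => -x ^ 2) (-(2 * x)) x := by
      simpa using (hasDerivAt_pow 2 x).fun_neg
    have he := hp.exp
    have h3 := ((he.fun_mul (hg x)).const_mul (-(1 / 2) : ℝ))
    convert! h3 using 1
    ring
  have htop' : Tendsto (fun x => -(1 / 2) * (Real.exp (-x ^ 2) * g x)) atTop (nhds 0) := by
    simpa using htop.const_mul (-(1/2) : ℝ)
  have hbot' : Tendsto (fun x => -(1 / 2) * (Real.exp (-x ^ 2) * g x)) atBot (nhds 0) := by
    simpa using hbot.const_mul (-(1/2) : ℝ)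
  have hzero := integral_line_deriv_zero _ _ hFderiv
    (h1.sub (h2.const_mul (1 / 2))) htop' hbot'
  rw [integral_sub h1 (h2.const_mul (1 / 2)), integral_const_mul] at hzero
  linarith

lemma bound_helper {u : ℝ → ℝ} (n : ℕ) (hu : ∀ x, |u x| ≤ |x| ^ n) :
    ∀ x, |Real.exp (-x ^ 2) * u x| ≤ (1 + x ^ (2 * n)) * Real.exp (-x ^ 2) := by
  intro x
  rw [abs_mul, Real.abs_exp]
  have h1 := abs_pow_le_aux x n
  have h2 := (hu x).trans h1
  have h3 := Real.exp_pos (-x ^ 2)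
  nlinarith [abs_nonneg (u x)]

lemma Int_gauss : Integrable fun x : ℝ => Real.exp (-x ^ 2) := by
  simpa [neg_mul] using integrable_exp_neg_mul_sq (b := 1) one_pos

lemma I_gauss : ∫ x : ℝ, Real.exp (-x ^ 2) = Real.sqrt π := by
  simpa [neg_mul, div_one] using integral_gaussian 1

lemma bu_cos (ω : ℝ) : ∀ x : ℝ, |Real.cos (ω * x)| ≤ |x| ^ 0 := by
  intro x; simpa using Real.abs_cos_le_one (ω * x)
lemma bu_sin (ω : ℝ) : ∀ x : ℝ, |Real.sin (ω * x)| ≤ |x| ^ 0 := by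
  intro x; simpa using Real.abs_sin_le_one (ω * x)
lemma bu_xsin (ω : ℝ) : ∀ x : ℝ, |x * Real.sin (ω * x)| ≤ |x| ^ 1 := by
  intro x; rw [abs_mul, pow_one]
  nlinarith [Real.abs_sin_le_one (ω * x), abs_nonneg x, abs_nonneg (Real.sin (ω * x))]
lemma bu_xcos (ω : ℝ) : ∀ x : ℝ, |x * Real.cos (ω * x)| ≤ |x| ^ 1 := by
  intro x; rw [abs_mul, pow_one]
  nlinarith [Real.abs_cos_le_one (ω * x), abs_nonneg x, abs_nonneg (Real.cos (ω * x))]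
lemma bu_x2cos (ω : ℝ) : ∀ x : ℝ, |x ^ 2 * Real.cos (ω * x)| ≤ |x| ^ 2 := by
  intro x; rw [abs_mul, abs_pow]
  nlinarith [Real.abs_cos_le_one (ω * x), abs_nonneg x, abs_nonneg (Real.cos (ω * x)),
    sq_nonneg (|x|)]
lemma bu_pow (n : ℕ) : ∀ x : ℝ, |x ^ n| ≤ |x| ^ n := by
  intro x; rw [abs_pow]

lemma Int_cos (ω : ℝ) : Integrable fun x : ℝ => Real.exp (-x ^ 2) * Real.cos (ω * x) :=
  key_integrable (by fun_prop) 0 (bound_helper 0 (bu_cos ω))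
lemma Int_xsin (ω : ℝ) : Integrable fun x : ℝ => Real.exp (-x ^ 2) * (x * Real.sin (ω * x)) :=
  key_integrable (by fun_prop) 1 (bound_helper 1 (bu_xsin ω))
lemma Int_x2cos (ω : ℝ) : Integrable fun x : ℝ => Real.exp (-x ^ 2) * (x ^ 2 * Real.cos (ω * x)) :=
  key_integrable (by fun_prop) 2 (bound_helper 2 (bu_x2cos ω))
lemma Int_x2 : Integrable fun x : ℝ => Real.exp (-x ^ 2) * x ^ 2 :=
  key_integrable (by fun_prop) 2 (bound_helper 2 (bu_pow 2))
lemma Int_x4 : Integrable fun x : ℝ => Real.exp (-x ^ 2) * x ^ 4 :=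
  key_integrable (by fun_prop) 4 (bound_helper 4 (bu_pow 4))

lemma I_cos (ω : ℝ) : ∫ x : ℝ, Real.exp (-x ^ 2) * Real.cos (ω * x)
    = Real.sqrt π * Real.exp (-ω ^ 2 / 4) := by
  have h := fourierIntegral_gaussian (b := 1) (by norm_num) (ω : ℂ)
  have hint : Integrable fun x : ℝ =>
      Complex.exp (Complex.I * ω * x) * Complex.exp (-1 * (x:ℂ) ^ 2) := by
    refine Int_gauss.mono' ?_ (Filter.Eventually.of_forall fun x => ?_)
    · apply Continuous.aestronglyMeasurable; fun_prop
    · rw [norm_mul, Complex.norm_exp, Complex.norm_exp]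
      have h1 : (Complex.I * ω * x).re = 0 := by simp
      have h2 : (-1 * (x:ℂ) ^ 2).re = -x ^ 2 := by simp [← Complex.ofReal_pow]
      rw [h1, h2]
      simp
  have hre : ∀ x : ℝ, (Complex.exp (Complex.I * ω * x) * Complex.exp (-1 * (x:ℂ) ^ 2)).re
      = Real.exp (-x ^ 2) * Real.cos (ω * x) := by
    intro x
    rw [← Complex.exp_add, Complex.exp_re]
    have h1 : (Complex.I * ω * x + -1 * (x:ℂ) ^ 2).re = -x ^ 2 := by
      simp [← Complex.ofReal_pow]
    have h2 : (Complex.I * ω * x + -1 * (x:ℂ) ^ 2).im = ω * x := by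
      simp [← Complex.ofReal_pow]
    rw [h1, h2]
  have hL := integral_re hint
  simp only [RCLike.re_to_complex] at hL
  rw [h] at hL
  have h1 : ((π:ℂ)) ^ (1/2 : ℂ) = ((Real.sqrt π : ℝ) : ℂ) := by
    rw [Real.sqrt_eq_rpow, show ((1/2 : ℂ)) = ((1/2 : ℝ) : ℂ) by norm_num,
      ← Complex.ofReal_cpow pi_pos.le]
  have h2 : (-(ω:ℂ) ^ 2 / (4 * 1)) = ((-ω ^ 2 / 4 : ℝ) : ℂ) := by push_cast; ring
  rw [div_one, h1, h2, ← Complex.ofReal_exp, ← Complex.ofReal_mul, Complex.ofReal_re] at hL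
  rw [← hL]
  congr 1
  funext x
  exact (hre x).symm

lemma I_x2 : ∫ x : ℝ, Real.exp (-x ^ 2) * x ^ 2 = Real.sqrt π / 2 := by
  have h := ibp (fun x => x) (fun _ => 1) (fun x => hasDerivAt_id x)
    (by
      refine Int_x2.congr (Filter.Eventually.of_forall fun x => ?_)
      ring)
    (by simpa [mul_one] using Int_gauss)
    ((key_tendsto 1 (bound_helper 1 (by intro x; rw [pow_one]))).1)
    ((key_tendsto 1 (bound_helper 1 (by intro x; rw [pow_one]))).2)
  have hfun : (fun x : ℝ => Real.exp (-x ^ 2) * x ^ 2) = fun x => x * Real.exp (-x ^ 2) * x :=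
    funext fun x => by ring
  rw [hfun, h]
  simp only [mul_one]
  rw [I_gauss]
  ring

lemma I_x4 : ∫ x : ℝ, Real.exp (-x ^ 2) * x ^ 4 = 3 / 4 * Real.sqrt π := by
  have hd : ∀ x : ℝ, HasDerivAt (fun x : ℝ => x ^ 3) (3 * x ^ 2) x := by
    intro x
    simpa using hasDerivAt_pow 3 x
  have h := ibp (fun x => x ^ 3) (fun x => 3 * x ^ 2) hd
    (by
      refine Int_x4.congr (Filter.Eventually.of_forall fun x => ?_)
      ring)
    (by
      have h5 := Int_x2.const_mul 3
      refine h5.congr (Filter.Eventually.of_forall fun x => ?_)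
      ring)
    ((key_tendsto 3 (bound_helper 3 (bu_pow 3))).1)
    ((key_tendsto 3 (bound_helper 3 (bu_pow 3))).2)
  have hfun : (fun x : ℝ => Real.exp (-x ^ 2) * x ^ 4) = fun x => x * Real.exp (-x ^ 2) * x ^ 3 :=
    funext fun x => by ring
  have hfun2 : (fun x : ℝ => Real.exp (-x ^ 2) * (3 * x ^ 2))
      = fun x => 3 * (Real.exp (-x ^ 2) * x ^ 2) := funext fun x => by ring
  rw [hfun, h, hfun2, integral_const_mul, I_x2]
  ring

lemma I_xsin (ω : ℝ) : ∫ x : ℝ, Real.exp (-x ^ 2) * (x * Real.sin (ω * x))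
    = ω / 2 * (Real.sqrt π * Real.exp (-ω ^ 2 / 4)) := by
  have hd : ∀ x : ℝ, HasDerivAt (fun x : ℝ => Real.sin (ω * x)) (ω * Real.cos (ω * x)) x := by
    intro x
    have h1 : HasDerivAt (fun x : ℝ => ω * x) ω x := by
      simpa using (hasDerivAt_id x).const_mul ω
    have h2 := (Real.hasDerivAt_sin (ω * x)).comp x h1
    simpa [mul_comm, Function.comp_def] using h2
  have h := ibp (fun x => Real.sin (ω * x)) (fun x => ω * Real.cos (ω * x)) hd
    (by
      refine (Int_xsin ω).congr (Filter.Eventually.of_forall fun x => ?_)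
      ring)
    (by
      have h5 := (Int_cos ω).const_mul ω
      refine h5.congr (Filter.Eventually.of_forall fun x => ?_)
      ring)
    ((key_tendsto 0 (bound_helper 0 (bu_sin ω))).1)
    ((key_tendsto 0 (bound_helper 0 (bu_sin ω))).2)
  have hfun : (fun x : ℝ => Real.exp (-x ^ 2) * (x * Real.sin (ω * x)))
      = fun x => x * Real.exp (-x ^ 2) * Real.sin (ω * x) := funext fun x => by ring
  have hfun2 : (fun x : ℝ => Real.exp (-x ^ 2) * (ω * Real.cos (ω * x)))
      = fun x => ω * (Real.exp (-x ^ 2) * Real.cos (ω * x)) := funext fun x => by ring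
  rw [hfun, h, hfun2, integral_const_mul, I_cos]
  ring

lemma I_x2cos (ω : ℝ) : ∫ x : ℝ, Real.exp (-x ^ 2) * (x ^ 2 * Real.cos (ω * x))
    = (1 / 2 - ω ^ 2 / 4) * (Real.sqrt π * Real.exp (-ω ^ 2 / 4)) := by
  have hd : ∀ x : ℝ, HasDerivAt (fun x : ℝ => x * Real.cos (ω * x))
      (Real.cos (ω * x) - ω * (x * Real.sin (ω * x))) x := by
    intro x
    have h1 : HasDerivAt (fun x : ℝ => ω * x) ω x := by
      simpa using (hasDerivAt_id x).const_mul ω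
    have hc : HasDerivAt (fun x : ℝ => Real.cos (ω * x)) (-Real.sin (ω * x) * ω) x :=
      (Real.hasDerivAt_cos (ω * x)).comp x h1
    have h2 := (hasDerivAt_id x).fun_mul hc
    convert! h2 using 1
    simp only [id_eq]
    ring
  have h := ibp (fun x => x * Real.cos (ω * x))
    (fun x => Real.cos (ω * x) - ω * (x * Real.sin (ω * x))) hd
    (by
      refine (Int_x2cos ω).congr (Filter.Eventually.of_forall fun x => ?_)
      ring)
    (by
      have h5 := (Int_cos ω).sub ((Int_xsin ω).const_mul ω)
      refine h5.congr (Filter.Eventually.of_forall fun x => ?_)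
      simp only [Pi.sub_apply]
      ring)
    ((key_tendsto 1 (bound_helper 1 (bu_xcos ω))).1)
    ((key_tendsto 1 (bound_helper 1 (bu_xcos ω))).2)
  have hfun : (fun x : ℝ => Real.exp (-x ^ 2) * (x ^ 2 * Real.cos (ω * x)))
      = fun x => x * Real.exp (-x ^ 2) * (x * Real.cos (ω * x)) := funext fun x => by ring
  have hfun2 : (fun x : ℝ => Real.exp (-x ^ 2) * (Real.cos (ω * x) - ω * (x * Real.sin (ω * x))))
      = fun x => Real.exp (-x ^ 2) * Real.cos (ω * x)
          - ω * (Real.exp (-x ^ 2) * (x * Real.sin (ω * x))) := funext fun x => by ring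
  rw [hfun, h, hfun2, integral_sub (Int_cos ω) ((Int_xsin ω).const_mul ω),
    integral_const_mul, I_cos, I_xsin]
  ring


lemma pointwise_id (ω z : ℝ) (hω : ω ≠ 0) (hz : z ≠ 0) :
    Real.exp (-z ^ 2) * z ^ 4 *
        ‖(1 : ℂ) - (-(2 / ((ω : ℂ) ^ 2 * (z : ℂ) ^ 2)) *
          (Complex.exp (Complex.I * ω * z) - 1 - Complex.I * ω * z))‖ ^ 2
      = Real.exp (-z ^ 2) * z ^ 4
        + 4 / ω ^ 2 * (Real.exp (-z ^ 2) * (z ^ 2 * Real.cos (ω * z)))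
        + 8 / ω ^ 4 * (Real.exp (-z ^ 2) - Real.exp (-z ^ 2) * Real.cos (ω * z))
        - 8 / ω ^ 3 * (Real.exp (-z ^ 2) * (z * Real.sin (ω * z))) := by
  have hωC : (ω : ℂ) ≠ 0 := Complex.ofReal_ne_zero.mpr hω
  have hzC : (z : ℂ) ≠ 0 := Complex.ofReal_ne_zero.mpr hz
  set a : ℝ := 1 + 2 / (ω ^ 2 * z ^ 2) * (Real.cos (ω * z) - 1) with ha
  set b : ℝ := 2 / (ω ^ 2 * z ^ 2) * (Real.sin (ω * z) - ω * z) with hb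
  have he : Complex.exp (Complex.I * ω * z)
      = ((Real.cos (ω * z) : ℝ) : ℂ) + ((Real.sin (ω * z) : ℝ) : ℂ) * Complex.I := by
    rw [show Complex.I * (ω:ℂ) * (z:ℂ) = ((ω * z : ℝ) : ℂ) * Complex.I by push_cast; ring,
      Complex.exp_mul_I]
    norm_cast
  have hw : (1 : ℂ) - (-(2 / ((ω : ℂ) ^ 2 * (z : ℂ) ^ 2)) *
      (Complex.exp (Complex.I * ω * z) - 1 - Complex.I * ω * z))
      = (a : ℂ) + (b : ℂ) * Complex.I := by
    rw [he, ha, hb]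
    push_cast
    field_simp
    ring
  rw [hw]
  have hnorm : ‖(a : ℂ) + (b : ℂ) * Complex.I‖ = Real.sqrt (a ^ 2 + b ^ 2) := by
    rw [Complex.norm_add_mul_I]
  rw [hnorm, Real.sq_sqrt (by positivity)]
  have key2 : (ω ^ 2 * z ^ 2 + 2 * (Real.cos (ω * z) - 1)) ^ 2
      + (2 * (Real.sin (ω * z) - ω * z)) ^ 2
      = ω ^ 4 * z ^ 4 + 4 * ω ^ 2 * z ^ 2 * Real.cos (ω * z) + 8 - 8 * Real.cos (ω * z)
        - 8 * (ω * z) * Real.sin (ω * z) + 4 * ω ^ 2 * z ^ 2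
        - 4 * ω ^ 2 * z ^ 2 := by
    linear_combination 4 * Real.sin_sq_add_cos_sq (ω * z)
  have hab : a ^ 2 + b ^ 2 = ((ω ^ 2 * z ^ 2 + 2 * (Real.cos (ω * z) - 1)) ^ 2
      + (2 * (Real.sin (ω * z) - ω * z)) ^ 2) / (ω ^ 2 * z ^ 2) ^ 2 := by
    rw [ha, hb]
    field_simp
  have main : z ^ 4 * (a ^ 2 + b ^ 2)
      = z ^ 4 + 4 / ω ^ 2 * (z ^ 2 * Real.cos (ω * z))
        + 8 / ω ^ 4 * (1 - Real.cos (ω * z)) - 8 / ω ^ 3 * (z * Real.sin (ω * z)) := by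
    rw [hab, key2]
    field_simp
    ring
  linear_combination Real.exp (-z ^ 2) * main

lemma elem_ineq {s : ℝ} (hs : 0 < s) :
    2 * (1 - Real.exp (-s)) - 2 * s * Real.exp (-s) - s ^ 2 / 3
      - 2 / 3 * s ^ 2 * Real.exp (-s) ≤ 0 := by
  set g : ℝ → ℝ := fun t => 2 * (1 - Real.exp (-t)) - 2 * t * Real.exp (-t) - t ^ 2 / 3
      - 2 / 3 * t ^ 2 * Real.exp (-t) with hg
  have hderiv : ∀ t, HasDerivAt g (2 / 3 * t * ((1 + t) * Real.exp (-t) - 1)) t := by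
    intro t
    have hexp : HasDerivAt (fun t : ℝ => Real.exp (-t)) (-Real.exp (-t)) t := by
      simpa using ((hasDerivAt_id t).neg).exp
    have h1 : HasDerivAt (fun t : ℝ => 2 * (1 - Real.exp (-t))) (2 * Real.exp (-t)) t := by
      simpa using ((hasDerivAt_const t (1:ℝ)).sub hexp).const_mul (2:ℝ)
    have h2 : HasDerivAt (fun t : ℝ => 2 * t * Real.exp (-t))
        (2 * Real.exp (-t) + 2 * t * (-Real.exp (-t))) t := by
      have := (((hasDerivAt_id t).const_mul (2:ℝ)).fun_mul hexp)
      convert! this using 1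
      simp only [id_eq]
      ring
    have h3 : HasDerivAt (fun t : ℝ => t ^ 2 / 3) (2 * t / 3) t := by
      have := (hasDerivAt_pow 2 t).div_const 3
      convert! this using 1
      push_cast
      ring
    have h4 : HasDerivAt (fun t : ℝ => 2 / 3 * t ^ 2 * Real.exp (-t))
        (2 / 3 * (2 * t) * Real.exp (-t) + 2 / 3 * t ^ 2 * (-Real.exp (-t))) t := by
      have := (((hasDerivAt_pow 2 t).const_mul (2/3 : ℝ)).fun_mul hexp)
      convert! this using 1
      push_cast
      ring
    have := ((h1.fun_sub h2).fun_sub h3).fun_sub h4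
    convert! this using 1
    ring
  have hmono : AntitoneOn g (Set.Ici 0) := by
    apply antitoneOn_of_deriv_nonpos (convex_Ici 0)
    · exact Continuous.continuousOn (by fun_prop)
    · intro t _
      exact (hderiv t).differentiableAt.differentiableWithinAt
    · intro t ht
      rw [interior_Ici] at ht
      rw [(hderiv t).deriv]
      have h1 : Real.exp (-t) * Real.exp t = 1 := by
        rw [← Real.exp_add]; simp
      have h2 := mul_le_mul_of_nonneg_right (Real.add_one_le_exp t) (Real.exp_pos (-t)).le
      have ht' : (0:ℝ) < t := ht
      nlinarith [Real.exp_pos (-t)]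
  have h0 : g 0 = 0 := by simp [hg]
  have := hmono (Set.self_mem_Ici) (Set.mem_Ici.mpr hs.le) hs.le
  rw [h0] at this
  exact this


theorem gaussian_kernel_mode_estimate (ε : ℝ) (hε : 0 < ε) (k : ℤ) (hk : k ≠ 0)
    (ω : ℝ) (hω : ω = 2 * π * k * ε) :
    (∫ z : ℝ, Real.exp (-z ^ 2) * z ^ 4 *
        ‖(1 : ℂ) - (-(2 / ((ω : ℂ) ^ 2 * (z : ℂ) ^ 2)) *
          (Complex.exp (Complex.I * ω * z) - 1 - Complex.I * ω * z))‖ ^ 2)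
      = 4 * Real.sqrt π / ω ^ 4 *
          (2 - 2 * Real.exp (-ω ^ 2 / 4) + 3 / 16 * ω ^ 4
            - 1 / 2 * ω ^ 2 * Real.exp (-ω ^ 2 / 4)
            - 1 / 4 * ω ^ 4 * Real.exp (-ω ^ 2 / 4)) ∧
    (∫ z : ℝ, Real.exp (-z ^ 2) * z ^ 4 *
        ‖(1 : ℂ) - (-(2 / ((ω : ℂ) ^ 2 * (z : ℂ) ^ 2)) *
          (Complex.exp (Complex.I * ω * z) - 1 - Complex.I * ω * z))‖ ^ 2)
      ≤ 5 / 6 * Real.sqrt π * (1 - Real.exp (-ω ^ 2 / 4)) := by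
  have hωne : ω ≠ 0 := by
    rw [hω]
    have hk' : (k : ℝ) ≠ 0 := Int.cast_ne_zero.mpr hk
    exact mul_ne_zero (mul_ne_zero (mul_ne_zero two_ne_zero Real.pi_ne_zero) hk') hε.ne'
  have h0 : ∀ᵐ z : ℝ, z ≠ 0 := by
    rw [MeasureTheory.ae_iff]
    simp only [not_not, Set.setOf_eq_eq_singleton]
    exact Real.volume_singleton
  have hae : (fun z : ℝ => Real.exp (-z ^ 2) * z ^ 4 *
      ‖(1 : ℂ) - (-(2 / ((ω : ℂ) ^ 2 * (z : ℂ) ^ 2)) *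
        (Complex.exp (Complex.I * ω * z) - 1 - Complex.I * ω * z))‖ ^ 2)
      =ᵐ[MeasureTheory.volume] (fun z : ℝ =>
        Real.exp (-z ^ 2) * z ^ 4
        + 4 / ω ^ 2 * (Real.exp (-z ^ 2) * (z ^ 2 * Real.cos (ω * z)))
        + 8 / ω ^ 4 * (Real.exp (-z ^ 2) - Real.exp (-z ^ 2) * Real.cos (ω * z))
        - 8 / ω ^ 3 * (Real.exp (-z ^ 2) * (z * Real.sin (ω * z)))) :=
    h0.mono fun z hz => pointwise_id ω z hωne hz
  have heq : (∫ z : ℝ, Real.exp (-z ^ 2) * z ^ 4 *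
      ‖(1 : ℂ) - (-(2 / ((ω : ℂ) ^ 2 * (z : ℂ) ^ 2)) *
        (Complex.exp (Complex.I * ω * z) - 1 - Complex.I * ω * z))‖ ^ 2)
      = 4 * Real.sqrt π / ω ^ 4 *
          (2 - 2 * Real.exp (-ω ^ 2 / 4) + 3 / 16 * ω ^ 4
            - 1 / 2 * ω ^ 2 * Real.exp (-ω ^ 2 / 4)
            - 1 / 4 * ω ^ 4 * Real.exp (-ω ^ 2 / 4)) := by
    rw [MeasureTheory.integral_congr_ae hae]
    have i1 := Int_x4
    have i2 := (Int_x2cos ω).const_mul (4 / ω ^ 2)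
    have i3 : MeasureTheory.Integrable (fun x : ℝ => 8 / ω ^ 4 *
        (Real.exp (-x ^ 2) - Real.exp (-x ^ 2) * Real.cos (ω * x))) := by
      have h3 := (Int_gauss.sub (Int_cos ω)).const_mul (8 / ω ^ 4)
      refine h3.congr (Filter.Eventually.of_forall fun x => ?_)
      simp only [Pi.sub_apply]
    have i4 := (Int_xsin ω).const_mul (8 / ω ^ 3)
    have e1 : (∫ a : ℝ, (Real.exp (-a ^ 2) * a ^ 4
          + 4 / ω ^ 2 * (Real.exp (-a ^ 2) * (a ^ 2 * Real.cos (ω * a)))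
          + 8 / ω ^ 4 * (Real.exp (-a ^ 2) - Real.exp (-a ^ 2) * Real.cos (ω * a))
          - 8 / ω ^ 3 * (Real.exp (-a ^ 2) * (a * Real.sin (ω * a)))))
        = (∫ a : ℝ, (Real.exp (-a ^ 2) * a ^ 4
          + 4 / ω ^ 2 * (Real.exp (-a ^ 2) * (a ^ 2 * Real.cos (ω * a)))
          + 8 / ω ^ 4 * (Real.exp (-a ^ 2) - Real.exp (-a ^ 2) * Real.cos (ω * a))))
          - ∫ a : ℝ, 8 / ω ^ 3 * (Real.exp (-a ^ 2) * (a * Real.sin (ω * a))) :=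
      MeasureTheory.integral_sub ((i1.add i2).add i3) i4
    have e2 : (∫ a : ℝ, (Real.exp (-a ^ 2) * a ^ 4
          + 4 / ω ^ 2 * (Real.exp (-a ^ 2) * (a ^ 2 * Real.cos (ω * a)))
          + 8 / ω ^ 4 * (Real.exp (-a ^ 2) - Real.exp (-a ^ 2) * Real.cos (ω * a))))
        = (∫ a : ℝ, (Real.exp (-a ^ 2) * a ^ 4
          + 4 / ω ^ 2 * (Real.exp (-a ^ 2) * (a ^ 2 * Real.cos (ω * a)))))
          + ∫ a : ℝ, 8 / ω ^ 4 * (Real.exp (-a ^ 2) - Real.exp (-a ^ 2) * Real.cos (ω * a)) :=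
      MeasureTheory.integral_add (i1.add i2) i3
    have e3 : (∫ a : ℝ, (Real.exp (-a ^ 2) * a ^ 4
          + 4 / ω ^ 2 * (Real.exp (-a ^ 2) * (a ^ 2 * Real.cos (ω * a)))))
        = (∫ a : ℝ, Real.exp (-a ^ 2) * a ^ 4)
          + ∫ a : ℝ, 4 / ω ^ 2 * (Real.exp (-a ^ 2) * (a ^ 2 * Real.cos (ω * a))) :=
      MeasureTheory.integral_add i1 i2
    have e4 : (∫ a : ℝ, (Real.exp (-a ^ 2) - Real.exp (-a ^ 2) * Real.cos (ω * a)))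
        = (∫ a : ℝ, Real.exp (-a ^ 2)) - ∫ a : ℝ, Real.exp (-a ^ 2) * Real.cos (ω * a) :=
      MeasureTheory.integral_sub Int_gauss (Int_cos ω)
    rw [e1, e2, e3, MeasureTheory.integral_const_mul, MeasureTheory.integral_const_mul,
      MeasureTheory.integral_const_mul, e4,
      I_x4, I_x2cos, I_gauss, I_cos, I_xsin]
    field_simp
    ring
  refine ⟨heq, ?_⟩
  rw [heq]
  have hs2 : (0:ℝ) < ω ^ 2 / 4 := by
    have h2 : (0:ℝ) < ω ^ 2 := lt_of_le_of_ne (sq_nonneg ω) (Ne.symm (pow_ne_zero 2 hωne))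
    linarith
  set s : ℝ := ω ^ 2 / 4 with hsdef
  have hgs := elem_ineq hs2
  have hE : -ω ^ 2 / 4 = -s := by rw [hsdef]; ring
  have h16 : ω ^ 4 = 16 * s ^ 2 := by rw [hsdef]; ring
  have h4 : ω ^ 2 = 4 * s := by rw [hsdef]; ring
  rw [hE, h16, h4]
  rw [div_mul_eq_mul_div, div_le_iff₀ (by positivity)]
  nlinarith [hgs, Real.sqrt_nonneg π, sq_nonneg s, hs2]
end
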